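/- The double coset $K_\mathbb{C} w_{\beta_2} B$ is contained in the closure (in $G_\mathbb{C}$) of the double coset $K_\mathbb{C} c_\delta w_{\beta_2} B$. (Remark 3.3, first inclusion: $S_3 \subset S_7^{cl}$.) -/

import Mathlib

open Matrix

noncomputable section

/-- 4×4 complex matrices. -/
abbrev M4 : Type := Matrix (Fin 4) (Fin 4) ℂ

/-- The standard symplectic form matrix `J = [[0, -I₂],[I₂, 0]]`. -/
def Jmat : M4 := !![0, 0, -1, 0; 0, 0, 0, -1; 1, 0, 0, 0; 0, 1, 0, 0]

/-- `G_ℂ = Sp(2,ℂ) = {g ∈ GL(4,ℂ) : ᵗg J g = J}`. -/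
def GC : Set M4 := {g | IsUnit g ∧ gᵀ * Jmat * g = Jmat}

/-- `K_ℂ = {diag(g, ᵗg⁻¹) : g ∈ GL(2,ℂ)}`. -/
def KC : Set M4 :=
  {m | ∃ g : Matrix (Fin 2) (Fin 2) ℂ, IsUnit g ∧
    m = !![g 0 0, g 0 1, 0, 0;
           g 1 0, g 1 1, 0, 0;
           0, 0, (gᵀ)⁻¹ 0 0, (gᵀ)⁻¹ 0 1;
           0, 0, (gᵀ)⁻¹ 1 0, (gᵀ)⁻¹ 1 1]}

/-- The Hermitian form of signature (2,2): `(w,z) = w̄₁z₁ + w̄₂z₂ - w̄₃z₃ - w̄₄z₄`. -/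
def hermForm (w z : Fin 4 → ℂ) : ℂ :=
  star (w 0) * z 0 + star (w 1) * z 1 - star (w 2) * z 2 - star (w 3) * z 3

/-- `G_ℝ = G_ℂ ∩ U(2,2)`. -/
def GR : Set M4 :=
  {g | g ∈ GC ∧ ∀ w z : Fin 4 → ℂ, hermForm (g.mulVec w) (g.mulVec z) = hermForm w z}

/-- The standard basis vectors of `ℂ⁴`. -/
def stdVec (i : Fin 4) : Fin 4 → ℂ := Pi.single i 1

/-- `U₊ = ℂe₁ ⊕ ℂe₂`. -/
def Uplus : Submodule ℂ (Fin 4 → ℂ) := Submodule.span ℂ {stdVec 0, stdVec 1}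

/-- `U₋ = ℂe₃ ⊕ ℂe₄`. -/
def Uminus : Submodule ℂ (Fin 4 → ℂ) := Submodule.span ℂ {stdVec 2, stdVec 3}

/-- The line `ℂe₁`. -/
def line1 : Submodule ℂ (Fin 4 → ℂ) := Submodule.span ℂ {stdVec 0}

/-- `Q = {g ∈ G_ℂ : g U₊ = U₊}`. -/
def Qpar : Set M4 := {g | g ∈ GC ∧ Uplus.map g.mulVecLin = Uplus}

/-- `Q̄ = {g ∈ G_ℂ : g U₋ = U₋}`. -/
def Qbar : Set M4 := {g | g ∈ GC ∧ Uminus.map g.mulVecLin = Uminus}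

/-- The Borel subgroup `B = {g ∈ G_ℂ : g ℂe₁ = ℂe₁, g U₊ = U₊}`. -/
def Bor : Set M4 :=
  {g | g ∈ GC ∧ line1.map g.mulVecLin = line1 ∧ Uplus.map g.mulVecLin = Uplus}

/-- `t₁(s) = exp s(E₃₁ - E₁₃)`. -/
def t1 (s : ℝ) : M4 :=
  !![(Real.cos s : ℂ), 0, (-(Real.sin s) : ℂ), 0;
     0, 1, 0, 0;
     ((Real.sin s : ℝ) : ℂ), 0, (Real.cos s : ℂ), 0;
     0, 0, 0, 1]

/-- `t₂(s) = exp s(E₄₂ - E₂₄)`. -/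
def t2 (s : ℝ) : M4 :=
  !![1, 0, 0, 0;
     0, (Real.cos s : ℂ), 0, (-(Real.sin s) : ℂ);
     0, 0, 1, 0;
     0, ((Real.sin s : ℝ) : ℂ), 0, (Real.cos s : ℂ)]

def cb1 : M4 := t1 (Real.pi / 4)
def cb2 : M4 := t2 (Real.pi / 4)
def wb1 : M4 := t1 (Real.pi / 2)
def wb2 : M4 := t2 (Real.pi / 2)

/-- `c_δ = (1/√2) · [[1,0,0,-1],[0,1,-1,0],[0,1,1,0],[1,0,0,1]]`. -/
def cdelta : M4 :=
  ((Real.sqrt 2 : ℂ))⁻¹ • !![1, 0, 0, -1; 0, 1, -1, 0; 0, 1, 1, 0; 1, 0, 0, 1]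

/-- The double coset `A g C = {a g c : a ∈ A, c ∈ C}`. -/
def dc (A : Set M4) (g : M4) (C : Set M4) : Set M4 :=
  {m | ∃ a ∈ A, ∃ c ∈ C, m = a * g * c}

/-! ### Auxiliary material -/

lemma sqrt2C_mul : ((Real.sqrt 2 : ℂ)) * ((Real.sqrt 2 : ℂ)) = 2 := by
  rw [← Complex.ofReal_mul, Real.mul_self_sqrt (by norm_num : (0:ℝ) ≤ 2)]
  norm_num

lemma sqrt2C_ne : ((Real.sqrt 2 : ℂ)) ≠ 0 := by
  intro h
  have h2 := sqrt2C_mul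
  rw [h] at h2
  norm_num at h2

lemma sqrt2C_inv_mul : ((Real.sqrt 2 : ℂ))⁻¹ * ((Real.sqrt 2 : ℂ))⁻¹ = 2⁻¹ := by
  rw [← mul_inv, sqrt2C_mul]

lemma wb2_eq : wb2 = !![1,0,0,0; 0,0,0,-1; 0,0,1,0; 0,1,0,0] := by
  rw [wb2, t2, Real.cos_pi_div_two, Real.sin_pi_div_two]
  norm_num

lemma Jmat_mul_self : Jmat * Jmat = -1 := by
  ext i j
  fin_cases i <;> fin_cases j <;>
    simp [Jmat, Matrix.mul_apply, Fin.sum_univ_four, Matrix.one_apply, Matrix.vecHead,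
      Matrix.vecTail]

lemma Jmat_det_isUnit : IsUnit Jmat.det := by
  apply Matrix.isUnit_det_of_right_inverse (B := -Jmat)
  rw [mul_neg, Jmat_mul_self, neg_neg]

lemma isUnit_of_symp {g : M4} (h : gᵀ * Jmat * g = Jmat) : IsUnit g := by
  rw [Matrix.isUnit_iff_isUnit_det]
  have hJ0 : Jmat.det ≠ 0 := Jmat_det_isUnit.ne_zero
  have h2 : g.det * g.det * Jmat.det = Jmat.det := by
    have := congrArg Matrix.det h
    simpa [Matrix.det_mul, Matrix.det_transpose, mul_comm, mul_assoc, mul_left_comm] using this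
  have h3 : g.det * g.det = 1 :=
    mul_right_cancel₀ hJ0 (by rw [h2, one_mul])
  exact IsUnit.of_mul_eq_one _ h3

lemma GC_mul {x y : M4} (hx : x ∈ GC) (hy : y ∈ GC) : x * y ∈ GC := by
  obtain ⟨hxu, hxs⟩ := hx
  obtain ⟨hyu, hys⟩ := hy
  refine ⟨hxu.mul hyu, ?_⟩
  have : (x*y)ᵀ * Jmat * (x*y) = yᵀ * (xᵀ * Jmat * x) * y := by
    rw [Matrix.transpose_mul]
    noncomm_ring
  rw [this, hxs, hys]

lemma Bor_mul {x y : M4} (hx : x ∈ Bor) (hy : y ∈ Bor) : x * y ∈ Bor := by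
  obtain ⟨hxg, hxl, hxu⟩ := hx
  obtain ⟨hyg, hyl, hyu⟩ := hy
  refine ⟨GC_mul hxg hyg, ?_, ?_⟩ <;>
    rw [Matrix.mulVecLin_mul, Submodule.map_comp]
  · rw [hyl, hxl]
  · rw [hyu, hxu]

lemma KC_mul {x y : M4} (hx : x ∈ KC) (hy : y ∈ KC) : x * y ∈ KC := by
  obtain ⟨g, hg, rfl⟩ := hx
  obtain ⟨g', hg', rfl⟩ := hy
  refine ⟨g * g', hg.mul hg', ?_⟩
  have hgd : IsUnit gᵀ.det := by
    rw [Matrix.det_transpose]; exact (Matrix.isUnit_iff_isUnit_det _).mp hg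
  have hgd' : IsUnit g'ᵀ.det := by
    rw [Matrix.det_transpose]; exact (Matrix.isUnit_iff_isUnit_det _).mp hg'
  have key : ((g*g')ᵀ)⁻¹ = (gᵀ)⁻¹ * (g'ᵀ)⁻¹ := by
    apply Matrix.inv_eq_right_inv
    rw [Matrix.transpose_mul]
    have h5 : g'ᵀ * gᵀ * ((gᵀ)⁻¹ * (g'ᵀ)⁻¹) = g'ᵀ * (gᵀ * (gᵀ)⁻¹) * (g'ᵀ)⁻¹ := by
      noncomm_ring
    rw [h5, Matrix.mul_nonsing_inv _ hgd, mul_one, Matrix.mul_nonsing_inv _ hgd']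
  rw [key]
  ext i j
  fin_cases i <;> fin_cases j <;>
    simp [Matrix.mul_apply, Fin.sum_univ_four, Fin.sum_univ_succ, Matrix.vecHead,
      Matrix.vecTail]

def kmat (u : ℂ) : M4 := !![u⁻¹,0,0,0; 0,1,0,0; 0,0,u,0; 0,0,0,1]

def bmat (u : ℂ) : M4 :=
  ((Real.sqrt 2 : ℂ))⁻¹ • !![2*u,1,0,0; 0,1,0,0; 0,0,u⁻¹,0; 0,0,-u⁻¹,2]

def nmat (u : ℂ) : M4 := !![1,0,0,0; u,1,0,0; 0,0,1,-u; 0,0,0,1]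

lemma kmat_mem {u : ℂ} (hu : u ≠ 0) : kmat u ∈ KC := by
  refine ⟨!![u⁻¹,0;0,1], ?_, ?_⟩
  · rw [Matrix.isUnit_iff_isUnit_det, Matrix.det_fin_two_of]
    simpa using inv_ne_zero hu
  · have h : (!![u⁻¹,0;0,1]ᵀ)⁻¹ = !![u,0;0,1] := by
      apply Matrix.inv_eq_right_inv
      ext i j
      fin_cases i <;> fin_cases j <;>
        simp [Matrix.mul_apply, Fin.sum_univ_succ, inv_mul_cancel₀ hu, Matrix.one_apply,
          Matrix.vecHead, Matrix.vecTail]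
    rw [h]
    ext i j
    fin_cases i <;> fin_cases j <;> simp [kmat]

lemma bmat_symp {u : ℂ} (hu : u ≠ 0) : (bmat u)ᵀ * Jmat * bmat u = Jmat := by
  unfold bmat
  rw [Matrix.transpose_smul, Matrix.smul_mul, Matrix.smul_mul, Matrix.mul_smul, smul_smul,
    sqrt2C_inv_mul]
  have hB : (!![2*u,1,0,0; 0,1,0,0; 0,0,u⁻¹,0; 0,0,-u⁻¹,2] : M4)ᵀ * Jmat *
      !![2*u,1,0,0; 0,1,0,0; 0,0,u⁻¹,0; 0,0,-u⁻¹,2] = (2:ℂ) • Jmat := by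
    ext i j
    fin_cases i <;> fin_cases j <;>
      simp [Jmat, Matrix.mul_apply, Fin.sum_univ_four, Matrix.transpose_apply,
        Matrix.vecHead, Matrix.vecTail] <;> field_simp
  rw [hB, smul_smul]
  norm_num

lemma bmat_mulVec0 {u : ℂ} :
    (bmat u).mulVec (stdVec 0) = (((Real.sqrt 2 : ℂ))⁻¹ * (2*u)) • stdVec 0 := by
  funext i
  fin_cases i <;>
    simp [bmat, stdVec, Matrix.mulVec, dotProduct, Fin.sum_univ_four, Pi.single_apply]

lemma bmat_mulVec1 {u : ℂ} :
    (bmat u).mulVec (stdVec 1) =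
      ((Real.sqrt 2 : ℂ))⁻¹ • stdVec 0 + ((Real.sqrt 2 : ℂ))⁻¹ • stdVec 1 := by
  funext i
  fin_cases i <;>
    simp [bmat, stdVec, Matrix.mulVec, dotProduct, Fin.sum_univ_four, Pi.single_apply]

lemma bmat_mem {u : ℂ} (hu : u ≠ 0) : bmat u ∈ Bor := by
  have hsymp := bmat_symp hu
  have hc0 : (((Real.sqrt 2 : ℂ))⁻¹ * (2*u)) ≠ 0 := by
    apply mul_ne_zero (inv_ne_zero sqrt2C_ne)
    exact mul_ne_zero two_ne_zero hu
  refine ⟨⟨isUnit_of_symp hsymp, hsymp⟩, ?_, ?_⟩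
  · rw [line1, Submodule.map_span]
    rw [Set.image_singleton, Matrix.mulVecLin_apply, bmat_mulVec0]
    exact Submodule.span_singleton_smul_eq (isUnit_iff_ne_zero.mpr hc0) _
  · rw [Uplus, Submodule.map_span]
    have himg : (bmat u).mulVecLin '' {stdVec 0, stdVec 1} =
        {(bmat u).mulVec (stdVec 0), (bmat u).mulVec (stdVec 1)} := by
      rw [Set.image_pair]; rfl
    rw [himg]
    apply le_antisymm
    · rw [Submodule.span_le]
      rintro v (rfl | rfl)
      · rw [bmat_mulVec0]
        exact Submodule.smul_mem _ _ (Submodule.subset_span (Set.mem_insert _ _))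
      · rw [bmat_mulVec1]
        exact Submodule.add_mem _
          (Submodule.smul_mem _ _ (Submodule.subset_span (Set.mem_insert _ _)))
          (Submodule.smul_mem _ _ (Submodule.subset_span (Set.mem_insert_of_mem _ rfl)))
    · rw [Submodule.span_le]
      rintro v (rfl | rfl)
      · rw [SetLike.mem_coe, Submodule.mem_span_pair]
        refine ⟨(((Real.sqrt 2 : ℂ))⁻¹ * (2*u))⁻¹, 0, ?_⟩
        rw [bmat_mulVec0, zero_smul, add_zero, smul_smul, inv_mul_cancel₀ hc0, one_smul]
      · rw [SetLike.mem_coe, Submodule.mem_span_pair]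
        refine ⟨-(((Real.sqrt 2 : ℂ))⁻¹ * (2*u))⁻¹, (Real.sqrt 2 : ℂ), ?_⟩
        rw [bmat_mulVec0, bmat_mulVec1, smul_smul, smul_add, smul_smul, smul_smul]
        rw [mul_inv_cancel₀ sqrt2C_ne, one_smul]
        rw [neg_mul, inv_mul_cancel₀ hc0]
        module

lemma key_identity {u : ℂ} (hu : u ≠ 0) :
    kmat u * (cdelta * wb2) * bmat u = wb2 * nmat u := by
  have hNW : (!![1, 0, 0, -1; 0, 1, -1, 0; 0, 1, 1, 0; 1, 0, 0, 1] : M4) *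
      !![1,0,0,0; 0,0,0,-1; 0,0,1,0; 0,1,0,0] =
      !![1,-1,0,0; 0,0,-1,-1; 0,0,1,-1; 1,1,0,0] := by
    ext i j
    fin_cases i <;> fin_cases j <;>
      simp [Matrix.mul_apply, Fin.sum_univ_four, Matrix.vecHead, Matrix.vecTail]
  have hK : kmat u * !![1,-1,0,0; 0,0,-1,-1; 0,0,1,-1; 1,1,0,0] =
      !![u⁻¹,-u⁻¹,0,0; 0,0,-1,-1; 0,0,u,-u; 1,1,0,0] := by
    ext i j
    fin_cases i <;> fin_cases j <;>
      simp [kmat, Matrix.mul_apply, Fin.sum_univ_four, Matrix.vecHead, Matrix.vecTail]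
  have hB : (!![u⁻¹,-u⁻¹,0,0; 0,0,-1,-1; 0,0,u,-u; 1,1,0,0] : M4) *
      !![2*u,1,0,0; 0,1,0,0; 0,0,u⁻¹,0; 0,0,-u⁻¹,2] =
      (2:ℂ) • !![1,0,0,0; 0,0,0,-1; 0,0,1,-u; u,1,0,0] := by
    ext i j
    fin_cases i <;> fin_cases j <;>
      simp [Matrix.mul_apply, Fin.sum_univ_four, Matrix.smul_apply, Matrix.vecHead,
        Matrix.vecTail] <;> (try field_simp) <;> (try ring)
  have hWN : (!![1,0,0,0; 0,0,0,-1; 0,0,1,0; 0,1,0,0] : M4) * nmat u =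
      !![1,0,0,0; 0,0,0,-1; 0,0,1,-u; u,1,0,0] := by
    ext i j
    fin_cases i <;> fin_cases j <;>
      simp [nmat, Matrix.mul_apply, Fin.sum_univ_four, Matrix.vecHead, Matrix.vecTail]
  rw [wb2_eq]
  unfold cdelta bmat
  simp only [Matrix.smul_mul, Matrix.mul_smul, smul_smul, sqrt2C_inv_mul]
  rw [hNW, hK, hB, hWN, smul_smul]
  norm_num

lemma nmat_zero : nmat 0 = 1 := by
  ext i j
  fin_cases i <;> fin_cases j <;> simp [nmat, Matrix.one_apply, Matrix.vecHead, Matrix.vecTail]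

lemma nmat_continuous : Continuous nmat := by
  apply continuous_matrix
  intro i j
  fin_cases i <;> fin_cases j <;> simp [nmat] <;> fun_prop

/-- Remark 3.3, first inclusion: `K_ℂ w_{β₂} B ⊆ cl(K_ℂ c_δ w_{β₂} B)`,
i.e. `S₃ ⊆ S₇^cl`. -/
theorem stmt_5 : dc KC wb2 Bor ⊆ closure (dc KC (cdelta * wb2) Bor) := by
  rintro m ⟨a, ha, c, hc, rfl⟩
  have hcont : Continuous fun u : ℂ => a * (wb2 * nmat u) * c := by
    exact ((continuous_const.matrix_mul
      (continuous_const.matrix_mul nmat_continuous)).matrix_mul continuous_const)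
  have hten : Filter.Tendsto (fun u : ℂ => a * (wb2 * nmat u) * c)
      (nhdsWithin 0 {(0:ℂ)}ᶜ) (nhds (a * wb2 * c)) := by
    have h0 := hcont.tendsto 0
    rw [nmat_zero, mul_one] at h0
    exact h0.mono_left nhdsWithin_le_nhds
  apply mem_closure_of_tendsto hten
  filter_upwards [self_mem_nhdsWithin] with u hu
  have hu' : u ≠ 0 := hu
  refine ⟨a * kmat u, KC_mul ha (kmat_mem hu'), bmat u * c, Bor_mul (bmat_mem hu') hc, ?_⟩
  rw [← key_identity hu']
  noncomm_ring
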